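/- Let 𝓡 be right amenable, let ℱ = (F_i)_{i∈I} be a right Følner net in 𝓡, let X be a strongly irreducible subshift of Q^M of finite type, let Y be a subshift of Q^M, and let Δ be a local map from X to Y such that Ent_ℱ(Δ(X)) < Ent_ℱ(X). Then Δ is not pre-injective. -/

import Mathlib

open Filter Set

namespace GoE

variable {G M Q : Type*}

/-- A left homogeneous space `⟨M, G, ▷⟩` together with a coordinate system
`⟨m₀, (g_{m₀,m})_{m∈M}⟩`: a cell space with finite stabiliser `G₀` of `m₀`. -/
structure CellSpace (G M : Type*) [Group G] where
  act : G → M → M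
  one_act : ∀ m : M, act 1 m = m
  mul_act : ∀ (g h : G) (m : M), act (g * h) m = act g (act h m)
  transitive : ∀ m m' : M, ∃ g : G, act g m = m'
  m0 : M
  coord : M → G
  coord_act : ∀ m : M, act (coord m) m0 = m
  stab_finite : {g : G | act g m0 = m0}.Finite

variable [Group G]

namespace CellSpace

/-- Membership in the stabiliser `G₀` of `m₀`. -/
def stab (R : CellSpace G M) (g : G) : Prop := R.act g R.m0 = R.m0

/-- The induced right semi-action `m ↝ gG₀ = g_{m₀,m} g ▷ m₀`, on representatives. -/
def sAct (R : CellSpace G M) (m : M) (g : G) : M := R.act (R.coord m * g) R.m0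

/-- `m ↝ ι n` where `ι : M → G/G₀`, `n ↦ G_{m₀,n}` is the canonical identification. -/
def nAct (R : CellSpace G M) (m n : M) : M := R.act (R.coord m * R.coord n) R.m0

/-- `S ⊆ G` represents a finite symmetric right generating set of cosets
(`G₀ · S ⊆ S`, `S⁻¹ ⊆ S`, and `S` generates). -/
structure IsRightGenSet (R : CellSpace G M) (S : Set G) : Prop where
  finite : S.Finite
  saturated : ∀ s ∈ S, ∀ g₀ : G, R.stab g₀ → s * g₀ ∈ S
  stab_mul : ∀ g₀ : G, R.stab g₀ → ∀ s ∈ S, g₀ * s ∈ S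
  symm : ∀ s ∈ S, s⁻¹ ∈ S
  generates : ∀ m : M, ∃ (k : ℕ) (f : ℕ → M), f 0 = R.m0 ∧ f k = m ∧
    ∀ i < k, ∃ s ∈ S, f (i + 1) = R.sAct (f i) s

/-- There is an `S`-path of length `n` from `m` to `m'` in the `S`-Cayley graph. -/
def Chain (R : CellSpace G M) (S : Set G) (m m' : M) (n : ℕ) : Prop :=
  ∃ f : ℕ → M, f 0 = m ∧ f n = m' ∧ ∀ i < n, ∃ s ∈ S, f (i + 1) = R.sAct (f i) s

/-- The `S`-metric `d`. -/
noncomputable def dist (R : CellSpace G M) (S : Set G) (m m' : M) : ℕ :=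
  sInf {n : ℕ | R.Chain S m m' n}

/-- The ball `B(m, ρ)` of radius `ρ` centred at `m`. -/
noncomputable def ball (R : CellSpace G M) (S : Set G) (m : M) (ρ : ℕ) : Set M :=
  {m' : M | R.dist S m m' ≤ ρ}

/-- The `θ`-interior `A^{-θ}` of `A`. -/
noncomputable def inter (R : CellSpace G M) (S : Set G) (A : Set M) (θ : ℕ) : Set M :=
  {m ∈ A | R.ball S m θ ⊆ A}

/-- The `θ`-closure `A^{+θ}` of `A`. -/
noncomputable def clos (R : CellSpace G M) (S : Set G) (A : Set M) (θ : ℕ) : Set M :=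
  {m : M | (R.ball S m θ ∩ A).Nonempty}

/-- The external `θ`-boundary `∂θ⁺A = A^{+θ} ∖ A`. -/
noncomputable def extB (R : CellSpace G M) (S : Set G) (A : Set M) (θ : ℕ) : Set M :=
  R.clos S A θ \ A

/-- The internal `θ`-boundary `∂θ⁻A = A ∖ A^{-θ}`. -/
noncomputable def intB (R : CellSpace G M) (S : Set G) (A : Set M) (θ : ℕ) : Set M :=
  A \ R.inter S A θ

/-- The `θ`-boundary `∂θA = A^{+θ} ∖ A^{-θ}`. -/
noncomputable def bdry (R : CellSpace G M) (S : Set G) (A : Set M) (θ : ℕ) : Set M :=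
  R.clos S A θ \ R.inter S A θ

end CellSpace

/-- The set `X_A` of restrictions to `A` of the elements of `X`. -/
def restr (A : Set M) (X : Set (M → Q)) : Set (A → Q) :=
  (fun x : M → Q => A.restrict x) '' X

/-- The pattern `p` (with domain `A`) semi-occurs in the configuration `c`:
there is `h ∈ H` with `h ⊛ p = c↾_{h ▷ dom p}`. -/
def SemiOccurs (R : CellSpace G M) (H : Subgroup G) {A : Set M} (p : A → Q)
    (c : M → Q) : Prop :=
  ∃ h ∈ H, ∀ a : A, c (R.act h ↑a) = p a

/-- The pattern `p` (with domain `A`) occurs at `t` in the configuration `c`: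
`t ⊛' p = c↾_{t ↝ A}`. -/
def OccursAt (R : CellSpace G M) {A : Set M} (p : A → Q) (t : M) (c : M → Q) : Prop :=
  ∀ a : A, c (R.nAct t ↑a) = p a

/-- The pattern `p` is allowed in `X`: it semi-occurs in some point of `X`. -/
def Allowed (R : CellSpace G M) (H : Subgroup G) (X : Set (M → Q)) {A : Set M}
    (p : A → Q) : Prop :=
  ∃ x ∈ X, SemiOccurs R H p x

/-- The set `⟨𝔉⟩` generated by a set `𝔉` of forbidden patterns. -/
def Generated (R : CellSpace G M) (H : Subgroup G) (𝔉 : Set (Σ A : Set M, A → Q)) :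
    Set (M → Q) :=
  {c : M → Q | ∀ f ∈ 𝔉, ¬ SemiOccurs R H f.2 c}

/-- `X` is a subshift of `Q^M`: it is generated by a set of blocks. -/
def IsSubshift (R : CellSpace G M) (H : Subgroup G) (X : Set (M → Q)) : Prop :=
  ∃ 𝔉 : Set (Σ A : Set M, A → Q), (∀ f ∈ 𝔉, f.1.Finite) ∧ X = Generated R H 𝔉

/-- `X` is a subshift of finite type: it is generated by a finite set of blocks. -/
def IsSubshiftFT (R : CellSpace G M) (H : Subgroup G) (X : Set (M → Q)) : Prop :=
  ∃ 𝔉 : Set (Σ A : Set M, A → Q), 𝔉.Finite ∧ (∀ f ∈ 𝔉, f.1.Finite) ∧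
    X = Generated R H 𝔉

/-- `X` is a `κ`-step subshift: it is generated by a set of `B(κ)`-blocks. -/
def IsStep (R : CellSpace G M) (S : Set G) (H : Subgroup G) (X : Set (M → Q))
    (κ : ℕ) : Prop :=
  ∃ 𝔉 : Set (Σ A : Set M, A → Q), (∀ f ∈ 𝔉, f.1 = R.ball S R.m0 κ) ∧
    X = Generated R H 𝔉

/-- `X` is `κ`-strongly irreducible. -/
def IsStronglyIrr (R : CellSpace G M) (S : Set G) (H : Subgroup G)
    (X : Set (M → Q)) (κ : ℕ) : Prop :=
  ∀ (A B : Set M), A.Finite → B.Finite → ∀ (p : A → Q) (p' : B → Q),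
    Allowed R H X p → Allowed R H X p' →
    (∀ a ∈ A, ∀ b ∈ B, κ + 1 ≤ R.dist S a b) →
    ∃ x ∈ X, A.restrict x = p ∧ B.restrict x = p'

/-- `X` has `ρ`-bounded propagation. -/
def HasBoundedProp (R : CellSpace G M) (S : Set G) (X : Set (M → Q)) (ρ : ℕ) : Prop :=
  ∀ F : Set M, F.Finite → ∀ p : F → Q,
    (∀ f ∈ F, ∃ x ∈ X, ∀ (m : M) (hm : m ∈ R.ball S f ρ ∩ F), p ⟨m, hm.2⟩ = x m) →
    ∃ x ∈ X, F.restrict x = p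

/-- `Δ` is a `κ`-local map from `X` to `Y`. -/
def IsLocalMap (R : CellSpace G M) (S : Set G) (H : Subgroup G)
    (X Y : Set (M → Q)) (Δ : (M → Q) → (M → Q)) (κ : ℕ) : Prop :=
  Set.MapsTo Δ X Y ∧
  ∃ N : Set M, N ⊆ R.ball S R.m0 κ ∧
    (∀ g₀ : G, R.stab g₀ → ∀ n ∈ N, R.act g₀ n ∈ N) ∧
    ∃ δ : (N → Q) → Q,
      (∀ h₀ ∈ H, R.stab h₀ →
        ∀ ℓ ∈ restr N X, ∀ ℓ' : N → Q,
          (∀ (n : M) (hn : n ∈ N) (hn' : R.act h₀⁻¹ n ∈ N),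
            ℓ' ⟨n, hn⟩ = ℓ ⟨R.act h₀⁻¹ n, hn'⟩) →
          δ ℓ' = δ ℓ) ∧
      ∀ x ∈ X, ∀ m : M, Δ x m = δ (fun n : N => x (R.nAct m ↑n))

/-- `Δ` is pre-injective on `X`. -/
def PreInjective (X : Set (M → Q)) (Δ : (M → Q) → (M → Q)) : Prop :=
  ∀ x ∈ X, ∀ x' ∈ X, Δ x = Δ x' → {m : M | x m ≠ x' m}.Finite → x = x'

/-- The cell space `R` is right amenable: there is a finitely additive probability
measure on the power set of `M` that is semi-invariant under the right semi-action. -/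
def RightAmenable (R : CellSpace G M) : Prop :=
  ∃ μ : Set M → ℝ, (∀ A : Set M, 0 ≤ μ A) ∧ μ Set.univ = 1 ∧
    (∀ A B : Set M, Disjoint A B → μ (A ∪ B) = μ A + μ B) ∧
    ∀ (g : G) (A : Set M), Set.InjOn (fun m => R.sAct m g) A →
      μ ((fun m => R.sAct m g) '' A) = μ A

/-- `F` is a right Følner net in `R` (indexed by the directed set `I`). -/
def IsFolnerNet (R : CellSpace G M) (S : Set G) {I : Type*} [Preorder I]
    (F : I → Set M) : Prop :=
  (∀ i, (F i).Nonempty) ∧ (∀ i, (F i).Finite) ∧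
  ∀ ρ : ℕ, Tendsto (fun i => ((R.bdry S (F i) ρ).ncard : ℝ) / ((F i).ncard : ℝ))
    atTop (nhds 0)

/-- The entropy of `X ⊆ Q^M` with respect to the net `F`:
`limsup_i log|X_{F_i}| / |F_i|`. -/
noncomputable def entropy (R : CellSpace G M) (S : Set G) {I : Type*} [Preorder I]
    (F : I → Set M) (X : Set (M → Q)) : ℝ :=
  limsup (fun i => Real.log ((restr (F i) X).ncard : ℝ) / ((F i).ncard : ℝ)) atTop

/-- `T` is a `⟨θ, κ, θ'⟩`-tiling of `R`. -/
def IsTiling (R : CellSpace G M) (S : Set G) (θ κ θ' : ℕ) (T : Set M) : Prop :=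
  (∀ t ∈ T, ∀ t' ∈ T, t ≠ t' →
    ∀ a ∈ R.ball S t θ, ∀ b ∈ R.ball S t' θ, κ + 1 ≤ R.dist S a b) ∧
  ∀ m : M, ∃ t ∈ T, m ∈ R.ball S t θ'

/-- The action `h ⊛ c` of `h ∈ G` on configurations: `(h ⊛ c)(m) = c(h⁻¹ ▷ m)`. -/
def shiftAct (R : CellSpace G M) (h : G) (c : M → Q) : M → Q :=
  fun m => c (R.act h⁻¹ m)

/-! ### Auxiliary lemmas -/

section Aux

variable (R : CellSpace G M) (S : Set G)

lemma act_inv_act (g : G) (m : M) : R.act g⁻¹ (R.act g m) = m := by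
  rw [← R.mul_act, inv_mul_cancel, R.one_act]

lemma act_inv_coord (m : M) : R.act (R.coord m)⁻¹ m = R.m0 := by
  have h := act_inv_act R (R.coord m) R.m0
  rwa [R.coord_act] at h

lemma chain_self (m : M) : R.Chain S m m 0 :=
  ⟨fun _ => m, rfl, rfl, fun i hi => absurd hi (Nat.not_lt_zero i)⟩

lemma chain_concat {m m' m'' : M} {n k : ℕ} (h1 : R.Chain S m m' n)
    (h2 : R.Chain S m' m'' k) : R.Chain S m m'' (n + k) := by
  obtain ⟨f, hf0, hfn, hfs⟩ := h1
  obtain ⟨g, hg0, hgk, hgs⟩ := h2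
  refine ⟨fun j => if j < n then f j else g (j - n), ?_, ?_, ?_⟩
  · show (if 0 < n then f 0 else g (0 - n)) = m
    by_cases h : 0 < n
    · rw [if_pos h]; exact hf0
    · have hn : n = 0 := by omega
      rw [if_neg h]
      have hmm : m = m' := by rw [← hf0, ← hfn, hn]
      rw [Nat.zero_sub, hg0, hmm]
  · show (if n + k < n then f (n + k) else g (n + k - n)) = m''
    rw [if_neg (by omega), Nat.add_sub_cancel_left]
    exact hgk
  · intro i hi
    show ∃ s ∈ S, (if i + 1 < n then f (i + 1) else g (i + 1 - n))
        = R.sAct (if i < n then f i else g (i - n)) s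
    by_cases h2 : i < n
    · obtain ⟨s, hs, he⟩ := hfs i h2
      refine ⟨s, hs, ?_⟩
      rw [if_pos h2]
      by_cases h1 : i + 1 < n
      · rw [if_pos h1]; exact he
      · have hn2 : i + 1 = n := by omega
        rw [if_neg h1, show i + 1 - n = 0 by omega, hg0, ← hfn, ← hn2]
        exact he
    · obtain ⟨s, hs, he⟩ := hgs (i - n) (by omega)
      refine ⟨s, hs, ?_⟩
      rw [if_neg (by omega : ¬ i + 1 < n), if_neg h2,
        show i + 1 - n = (i - n) + 1 by omega]
      exact he

lemma step_rev (hS : R.IsRightGenSet S) {u v : M} {s : G} (hs : s ∈ S)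
    (h : v = R.sAct u s) : ∃ s' ∈ S, u = R.sAct v s' := by
  have hv : R.act (R.coord u * s) R.m0 = v := h.symm
  have hg0 : R.stab ((R.coord v)⁻¹ * (R.coord u * s)) := by
    show R.act _ R.m0 = R.m0
    rw [R.mul_act, hv]
    exact act_inv_coord R v
  refine ⟨(R.coord v)⁻¹ * (R.coord u * s) * s⁻¹,
    hS.stab_mul _ hg0 s⁻¹ (hS.symm s hs), ?_⟩
  show u = R.act (R.coord v * ((R.coord v)⁻¹ * (R.coord u * s) * s⁻¹)) R.m0
  have harg : R.coord v * ((R.coord v)⁻¹ * (R.coord u * s) * s⁻¹) = R.coord u := by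
    group
  rw [harg, R.coord_act]

lemma step_act (hS : R.IsRightGenSet S) (g : G) {u : M} {s : G} (hs : s ∈ S) :
    ∃ s' ∈ S, R.act g (R.sAct u s) = R.sAct (R.act g u) s' := by
  have hg0 : R.stab ((R.coord (R.act g u))⁻¹ * (g * R.coord u)) := by
    show R.act _ R.m0 = R.m0
    rw [R.mul_act, R.mul_act, R.coord_act]
    exact act_inv_coord R _
  refine ⟨(R.coord (R.act g u))⁻¹ * (g * R.coord u) * s,
    hS.stab_mul _ hg0 s hs, ?_⟩
  show R.act g (R.act (R.coord u * s) R.m0)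
      = R.act (R.coord (R.act g u) * ((R.coord (R.act g u))⁻¹ * (g * R.coord u) * s)) R.m0
  have harg : R.coord (R.act g u) * ((R.coord (R.act g u))⁻¹ * (g * R.coord u) * s)
      = g * (R.coord u * s) := by group
  rw [harg, R.mul_act g (R.coord u * s) R.m0]

lemma chain_act (hS : R.IsRightGenSet S) (g : G) {m m' : M} {n : ℕ}
    (h : R.Chain S m m' n) : R.Chain S (R.act g m) (R.act g m') n := by
  obtain ⟨f, h0, hn, hsp⟩ := h
  refine ⟨fun j => R.act g (f j), by show R.act g (f 0) = R.act g m; rw [h0],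
    by show R.act g (f n) = R.act g m'; rw [hn], ?_⟩
  intro i hi
  obtain ⟨s, hs, he⟩ := hsp i hi
  obtain ⟨s', hs', he'⟩ := step_act R S hS g (u := f i) hs
  refine ⟨s', hs', ?_⟩
  show R.act g (f (i + 1)) = R.sAct (R.act g (f i)) s'
  rw [he]
  exact he'

lemma chain_symm (hS : R.IsRightGenSet S) {m m' : M} {n : ℕ}
    (h : R.Chain S m m' n) : R.Chain S m' m n := by
  obtain ⟨f, h0, hn, hsp⟩ := h
  refine ⟨fun j => f (n - j), by show f (n - 0) = m'; rw [Nat.sub_zero]; exact hn,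
    by show f (n - n) = m; rw [Nat.sub_self]; exact h0, ?_⟩
  intro i hi
  obtain ⟨s, hs, he⟩ := hsp (n - i - 1) (by omega)
  have e1 : n - i = (n - i - 1) + 1 := by omega
  have e2 : n - (i + 1) = n - i - 1 := by omega
  obtain ⟨s', hs', he'⟩ := step_rev R S hS hs he
  refine ⟨s', hs', ?_⟩
  show f (n - (i + 1)) = R.sAct (f (n - i)) s'
  rw [e2, e1]
  exact he'

lemma chain_exists (hS : R.IsRightGenSet S) (m m' : M) : ∃ n, R.Chain S m m' n := by
  obtain ⟨k, f, h0, hk, hsp⟩ := hS.generates m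
  obtain ⟨k', f', h0', hk', hsp'⟩ := hS.generates m'
  exact ⟨k + k', chain_concat R S (chain_symm R S hS ⟨f, h0, hk, hsp⟩)
    ⟨f', h0', hk', hsp'⟩⟩

lemma dist_chain (hS : R.IsRightGenSet S) (m m' : M) :
    R.Chain S m m' (R.dist S m m') :=
  Nat.sInf_mem (chain_exists R S hS m m')

lemma dist_le {m m' : M} {n : ℕ} (h : R.Chain S m m' n) : R.dist S m m' ≤ n :=
  Nat.sInf_le h

lemma dist_self (m : M) : R.dist S m m = 0 :=
  Nat.le_zero.mp (dist_le R S (chain_self R S m))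

lemma dist_eq_zero (hS : R.IsRightGenSet S) {m m' : M}
    (h : R.dist S m m' = 0) : m = m' := by
  have hc := dist_chain R S hS m m'
  rw [h] at hc
  obtain ⟨f, h0, h1, _⟩ := hc
  rw [← h0, h1]

lemma dist_symm (hS : R.IsRightGenSet S) (m m' : M) :
    R.dist S m m' = R.dist S m' m :=
  le_antisymm (dist_le R S (chain_symm R S hS (dist_chain R S hS m' m)))
    (dist_le R S (chain_symm R S hS (dist_chain R S hS m m')))

lemma dist_triangle (hS : R.IsRightGenSet S) (m m' m'' : M) :
    R.dist S m m'' ≤ R.dist S m m' + R.dist S m' m'' :=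
  dist_le R S (chain_concat R S (dist_chain R S hS m m') (dist_chain R S hS m' m''))

lemma dist_act_le (hS : R.IsRightGenSet S) (g : G) (m m' : M) :
    R.dist S (R.act g m) (R.act g m') ≤ R.dist S m m' :=
  dist_le R S (chain_act R S hS g (dist_chain R S hS m m'))

lemma ball_finite (hS : R.IsRightGenSet S) (m : M) (ρ : ℕ) :
    (R.ball S m ρ).Finite := by
  induction ρ with
  | zero =>
    refine (Set.finite_singleton m).subset ?_
    intro m' hm'
    have h0 : R.dist S m m' = 0 := Nat.le_zero.mp hm'
    exact (dist_eq_zero R S hS h0).symm ▸ rfl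
  | succ ρ ih =>
    refine Set.Finite.subset (ih.union (hS.finite.biUnion
      (fun s _ => ih.image (fun u => R.sAct u s)))) ?_
    intro m' hm'
    rcases Nat.lt_or_ge (R.dist S m m') (ρ + 1) with h | h
    · exact Or.inl (Nat.lt_succ_iff.mp h)
    · have hn : R.dist S m m' = ρ + 1 := le_antisymm hm' h
      obtain ⟨f, h0, h1, hsp⟩ := dist_chain R S hS m m'
      rw [hn] at h1 hsp
      obtain ⟨s, hs, he⟩ := hsp ρ (by omega)
      refine Or.inr (Set.mem_biUnion hs ⟨f ρ, ?_, ?_⟩)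
      · exact dist_le R S ⟨f, h0, rfl, fun i hi => hsp i (by omega)⟩
      · show R.sAct (f ρ) s = m'
        rw [← he]
        exact h1

lemma subset_clos (A : Set M) (ρ : ℕ) : A ⊆ R.clos S A ρ := by
  intro m hm
  refine ⟨m, ⟨?_, hm⟩⟩
  show R.dist S m m ≤ ρ
  rw [dist_self R S]
  exact Nat.zero_le ρ

lemma clos_finite (hS : R.IsRightGenSet S) {A : Set M} (hA : A.Finite) (ρ : ℕ) :
    (R.clos S A ρ).Finite := by
  refine Set.Finite.subset (hA.biUnion (fun a _ => ball_finite R S hS a ρ)) ?_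
  rintro m ⟨u, hu, huA⟩
  refine Set.mem_biUnion huA ?_
  show R.dist S u m ≤ ρ
  rw [dist_symm R S hS]
  exact hu

lemma exists_diam (hS : R.IsRightGenSet S) (𝔉 : Set (Σ A : Set M, A → Q))
    (h𝔉 : 𝔉.Finite) (hdom : ∀ f ∈ 𝔉, f.1.Finite) :
    ∃ r : ℕ, ∀ f ∈ 𝔉, ∀ a ∈ f.1, ∀ b ∈ f.1, R.dist S a b ≤ r := by
  have hfin : (⋃ f ∈ 𝔉, (fun p : M × M => R.dist S p.1 p.2) '' (f.1 ×ˢ f.1)).Finite :=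
    h𝔉.biUnion fun f hf => ((hdom f hf).prod (hdom f hf)).image _
  obtain ⟨r, hr⟩ := hfin.bddAbove
  exact ⟨r, fun f hf a ha b hb => hr (Set.mem_biUnion hf ⟨(a, b), ⟨ha, hb⟩, rfl⟩)⟩

lemma splice (hS : R.IsRightGenSet S) {H : Subgroup G}
    {𝔉 : Set (Σ A : Set M, A → Q)} {r : ℕ}
    (hr : ∀ f ∈ 𝔉, ∀ a ∈ f.1, ∀ b ∈ f.1, R.dist S a b ≤ r)
    {x y : M → Q} (hx : x ∈ Generated R H 𝔉) (hy : y ∈ Generated R H 𝔉)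
    (A : Set M) (hxy : ∀ m ∈ R.clos S A r, m ∉ A → x m = y m)
    (z : M → Q) (hzx : ∀ m ∈ A, z m = x m) (hzy : ∀ m ∉ A, z m = y m) :
    z ∈ Generated R H 𝔉 := by
  intro f hf hso
  obtain ⟨h, hH, hocc⟩ := hso
  by_cases hcase : ∃ a : f.1, R.act h ↑a ∈ A
  · obtain ⟨a₀, ha₀⟩ := hcase
    have hz : ∀ a : f.1, z (R.act h ↑a) = x (R.act h ↑a) := by
      intro a
      by_cases hA : R.act h ↑a ∈ A
      · exact hzx _ hA
      · have hclos : R.act h ↑a ∈ R.clos S A r :=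
          ⟨R.act h ↑a₀, ⟨le_trans (dist_act_le R S hS h ↑a ↑a₀)
            (hr f hf ↑a a.2 ↑a₀ a₀.2), ha₀⟩⟩
        rw [hzy _ hA, ← hxy _ hclos hA]
    exact hx f hf ⟨h, hH, fun a => by rw [← hz a]; exact hocc a⟩
  · push_neg at hcase
    exact hy f hf ⟨h, hH, fun a => by rw [← hzy _ (hcase a)]; exact hocc a⟩

variable [Finite Q]

lemma restr_finite {F : Set M} (hF : F.Finite) (X : Set (M → Q)) :
    (restr F X).Finite := by
  haveI := hF.to_subtype
  exact Set.toFinite _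

lemma restr_nonempty {F : Set M} {X : Set (M → Q)} (hX : X.Nonempty) :
    (restr F X).Nonempty := by
  obtain ⟨x, hx⟩ := hX
  exact ⟨_, x, hx, rfl⟩

lemma ncard_restr_le {F : Set M} (hF : F.Finite) (X : Set (M → Q)) :
    (restr F X).ncard ≤ Nat.card Q ^ F.ncard := by
  haveI := hF.to_subtype
  calc (restr F X).ncard ≤ (Set.univ : Set (↥F → Q)).ncard :=
        Set.ncard_le_ncard (Set.subset_univ _) Set.finite_univ
    _ = Nat.card (↥F → Q) := Set.ncard_univ _
    _ = Nat.card Q ^ Nat.card ↥F := Nat.card_fun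
    _ = Nat.card Q ^ F.ncard := by rw [Nat.card_coe_set_eq]

lemma ncard_set_prod {α β : Type*} (s : Set α) (t : Set β) :
    (s ×ˢ t).ncard = s.ncard * t.ncard := by
  rw [← Nat.card_coe_set_eq, ← Nat.card_coe_set_eq, ← Nat.card_coe_set_eq,
    Nat.card_congr (Equiv.Set.prod s t), Nat.card_prod]

lemma restr_split (Y' : Set (M → Q)) {F E : Set M} (hFE : F ⊆ E) (hE : E.Finite) :
    (restr E Y').ncard ≤ (restr F Y').ncard * Nat.card Q ^ (E \ F).ncard := by
  classical
  haveI := hE.to_subtype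
  haveI := (hE.subset (Set.diff_subset (s := E) (t := F))).to_subtype
  haveI := (hE.subset hFE).to_subtype
  set φ : (↥E → Q) → (↥F → Q) × (↥(E \ F) → Q) :=
    fun u => (fun a => u ⟨↑a, hFE a.2⟩, fun a => u ⟨↑a, a.2.1⟩) with hφ
  have hmaps : ∀ u ∈ restr E Y',
      φ u ∈ (restr F Y') ×ˢ (Set.univ : Set (↥(E \ F) → Q)) := by
    rintro u ⟨x, hx, rfl⟩
    exact ⟨⟨x, hx, rfl⟩, trivial⟩
  have hinj : Set.InjOn φ (restr E Y') := by
    intro u _ v _ huv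
    funext a
    by_cases haF : (a : M) ∈ F
    · have h1 := congrFun (congrArg Prod.fst huv) ⟨↑a, haF⟩
      simpa [hφ] using h1
    · have h1 := congrFun (congrArg Prod.snd huv) ⟨↑a, a.2, haF⟩
      simpa [hφ] using h1
  calc (restr E Y').ncard
      ≤ ((restr F Y') ×ˢ (Set.univ : Set (↥(E \ F) → Q))).ncard :=
        Set.ncard_le_ncard_of_injOn φ hmaps hinj (Set.toFinite _)
    _ = (restr F Y').ncard * (Set.univ : Set (↥(E \ F) → Q)).ncard :=
        ncard_set_prod _ _
    _ = (restr F Y').ncard * Nat.card Q ^ (E \ F).ncard := by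
        rw [Set.ncard_univ, Nat.card_fun, Nat.card_coe_set_eq]

lemma exists_good (hS : R.IsRightGenSet S) {H : Subgroup G}
    {X : Set (M → Q)} {𝔉 : Set (Σ A : Set M, A → Q)} {r : ℕ}
    (hr : ∀ f ∈ 𝔉, ∀ a ∈ f.1, ∀ b ∈ f.1, R.dist S a b ≤ r)
    (hXeq : X = Generated R H 𝔉)
    {κ₁ : ℕ} (hsi : IsStronglyIrr R S H X κ₁)
    {y : M → Q} (hy : y ∈ X) {F' : Set M} (hF' : F'.Finite)
    {x : M → Q} (hx : x ∈ X) :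
    ∃ z ∈ X, (∀ m ∈ F', z m = x m) ∧ ∀ m ∉ R.clos S F' κ₁, z m = y m := by
  classical
  set A := R.clos S F' κ₁ with hA
  set W := R.clos S A r \ A with hW
  have hAfin : A.Finite := clos_finite R S hS hF' κ₁
  have hWfin : W.Finite := (clos_finite R S hS hAfin r).subset Set.diff_subset
  have hallow : ∀ (B : Set M) (w : M → Q), w ∈ X → Allowed R H X (B.restrict w) :=
    fun B w hw => ⟨w, hw, 1, H.one_mem, fun a => by rw [R.one_act]; rfl⟩
  have hdist : ∀ a ∈ F', ∀ b ∈ W, κ₁ + 1 ≤ R.dist S a b := by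
    intro a ha b hb
    by_contra hlt
    push_neg at hlt
    exact hb.2 ⟨a, ⟨by
      show R.dist S b a ≤ κ₁
      rw [dist_symm R S hS]
      omega, ha⟩⟩
  obtain ⟨x₁, hx₁X, hx₁F, hx₁W⟩ := hsi F' W hF' hWfin (F'.restrict x) (W.restrict y)
    (hallow _ _ hx) (hallow _ _ hy) hdist
  refine ⟨fun m => if m ∈ A then x₁ m else y m, ?_, ?_, ?_⟩
  · rw [hXeq] at hx₁X hy ⊢
    refine splice R S hS hr hx₁X hy A ?_ _ (fun m hm => if_pos hm)
      (fun m hm => if_neg hm)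
    intro m hm hmA
    exact congrFun hx₁W ⟨m, hm, hmA⟩
  · intro m hm
    show (if m ∈ A then x₁ m else y m) = x m
    rw [if_pos (show m ∈ A from subset_clos R S F' κ₁ hm)]
    exact congrFun hx₁F ⟨m, hm⟩
  · intro m hm
    show (if m ∈ A then x₁ m else y m) = y m
    exact if_neg hm

end Aux

theorem stmt15 {I : Type*} [Nonempty I] [SemilatticeSup I]
    [Finite Q] (R : CellSpace G M) (S : Set G) (hS : R.IsRightGenSet S)
    (H : Subgroup G) (hH : ∀ m : M, R.coord m ∈ H)
    (hAm : RightAmenable R) (F : I → Set M) (hF : IsFolnerNet R S F)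
    (X : Set (M → Q)) (hX : IsSubshiftFT R H X)
    (hXsi : ∃ κ : ℕ, IsStronglyIrr R S H X κ)
    (Y : Set (M → Q)) (hY : IsSubshift R H Y)
    (Δ : (M → Q) → (M → Q)) (hΔ : ∃ κ : ℕ, IsLocalMap R S H X Y Δ κ)
    (hent : entropy R S F (Δ '' X) < entropy R S F X) :
    ¬ PreInjective X Δ := by
  classical
  intro hPI
  obtain ⟨κ₁, hsi⟩ := hXsi
  obtain ⟨κ₀, hmaps, N, hNsub, -, δ, -, hδ⟩ := hΔ
  obtain ⟨𝔉, h𝔉fin, h𝔉dom, hXeq⟩ := hX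
  obtain ⟨r, hr⟩ := exists_diam R S hS 𝔉 h𝔉fin h𝔉dom
  obtain ⟨hFne, hFfin, hFtend⟩ := hF
  rcases Set.eq_empty_or_nonempty X with hXe | hXne
  · rw [hXe, Set.image_empty] at hent
    have he : entropy R S F (∅ : Set (M → Q)) = 0 := by
      have hz : (fun i => Real.log ((restr (F i) (∅ : Set (M → Q))).ncard : ℝ) /
          ((F i).ncard : ℝ)) = fun _ : I => (0 : ℝ) := by
        funext i
        rw [show restr (F i) (∅ : Set (M → Q)) = ∅ from Set.image_empty _]
        simp
      unfold entropy
      rw [hz]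
      exact Filter.limsup_const 0
    rw [he] at hent
    exact lt_irrefl 0 hent
  obtain ⟨y, hyX⟩ := hXne
  have hQne : Nonempty Q := ⟨y R.m0⟩
  have hq1 : 1 ≤ Nat.card Q := Nat.one_le_iff_ne_zero.mpr Nat.card_pos.ne'
  set θ : ℕ := κ₀ + κ₁ with hθ
  -- the key counting inequality, using pre-injectivity
  have key : ∀ i : I, (restr (F i) X).ncard ≤
      (restr (R.clos S (F i) θ) (Δ '' X)).ncard := by
    intro i
    have hF'fin : (F i).Finite := hFfin i
    have hEfin : (R.clos S (F i) θ).Finite := clos_finite R S hS hF'fin θ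
    have hex : ∀ p : ↥(F i) → Q, p ∈ restr (F i) X →
        ∃ z, z ∈ X ∧ (F i).restrict z = p ∧ ∀ m ∉ R.clos S (F i) κ₁, z m = y m := by
      intro p hp
      obtain ⟨x, hxX, hxp⟩ := hp
      obtain ⟨z, hz, hzF, hzout⟩ := exists_good R S hS hr hXeq hsi hyX hF'fin hxX
      refine ⟨z, hz, ?_, hzout⟩
      funext a
      rw [← hxp]
      exact hzF ↑a a.2
    set ζ : (↥(F i) → Q) → (M → Q) :=
      fun p => if h : p ∈ restr (F i) X then (hex p h).choose else y with hζ
    have hζX : ∀ p, ∀ hp : p ∈ restr (F i) X, ζ p ∈ X := by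
      intro p hp
      show (if h : p ∈ restr (F i) X then (hex p h).choose else y) ∈ X
      rw [dif_pos hp]
      exact (hex p hp).choose_spec.1
    have hζF : ∀ p, ∀ hp : p ∈ restr (F i) X, (F i).restrict (ζ p) = p := by
      intro p hp
      show (F i).restrict (if h : p ∈ restr (F i) X then (hex p h).choose else y) = p
      rw [dif_pos hp]
      exact (hex p hp).choose_spec.2.1
    have hζout : ∀ p, ∀ hp : p ∈ restr (F i) X,
        ∀ m ∉ R.clos S (F i) κ₁, ζ p m = y m := by
      intro p hp
      show ∀ m ∉ R.clos S (F i) κ₁,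
        (if h : p ∈ restr (F i) X then (hex p h).choose else y) m = y m
      rw [dif_pos hp]
      exact (hex p hp).choose_spec.2.2
    refine Set.ncard_le_ncard_of_injOn
      (fun p => (R.clos S (F i) θ).restrict (Δ (ζ p))) ?_ ?_ (restr_finite hEfin _)
    · intro p hp
      exact ⟨Δ (ζ p), Set.mem_image_of_mem Δ (hζX p hp), rfl⟩
    · intro p hp p' hp' hpe
      have hfull : Δ (ζ p) = Δ (ζ p') := by
        funext m
        by_cases hm : m ∈ R.clos S (F i) θ
        · exact congrFun hpe ⟨m, hm⟩
        · rw [hδ (ζ p) (hζX p hp) m, hδ (ζ p') (hζX p' hp') m]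
          congr 1
          funext n
          have hdn : R.dist S m (R.nAct m ↑n) ≤ κ₀ := by
            have h2 : R.nAct m ↑n = R.act (R.coord m) ↑n := by
              show R.act (R.coord m * R.coord ↑n) R.m0 = _
              rw [R.mul_act, R.coord_act]
            rw [h2]
            calc R.dist S m (R.act (R.coord m) ↑n)
                = R.dist S (R.act (R.coord m) R.m0) (R.act (R.coord m) ↑n) := by
                  rw [R.coord_act]
              _ ≤ R.dist S R.m0 ↑n := dist_act_le R S hS _ _ _
              _ ≤ κ₀ := hNsub n.2
          have hnot : R.nAct m ↑n ∉ R.clos S (F i) κ₁ := by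
            intro hmem
            obtain ⟨u, hu1, hu2⟩ := hmem
            refine hm ⟨u, ?_, hu2⟩
            show R.dist S m u ≤ θ
            calc R.dist S m u
                ≤ R.dist S m (R.nAct m ↑n) + R.dist S (R.nAct m ↑n) u :=
                  dist_triangle R S hS _ _ _
              _ ≤ κ₀ + κ₁ := Nat.add_le_add hdn hu1
          rw [hζout p hp _ hnot, hζout p' hp' _ hnot]
      have hdiff : {m | ζ p m ≠ ζ p' m}.Finite := by
        refine (clos_finite R S hS hF'fin κ₁).subset ?_
        intro m hm
        by_contra hA
        exact hm (by rw [hζout p hp m hA, hζout p' hp' m hA])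
      have heq := hPI (ζ p) (hζX p hp) (ζ p') (hζX p' hp') hfull hdiff
      rw [← hζF p hp, ← hζF p' hp', heq]
  -- numerical part
  set a : I → ℝ :=
    fun i => Real.log ((restr (F i) X).ncard : ℝ) / ((F i).ncard : ℝ) with ha
  set b : I → ℝ :=
    fun i => Real.log ((restr (F i) (Δ '' X)).ncard : ℝ) / ((F i).ncard : ℝ) with hb
  set c : I → ℝ :=
    fun i => ((R.bdry S (F i) θ).ncard : ℝ) / ((F i).ncard : ℝ) *
      Real.log (Nat.card Q) with hc
  have hFpos : ∀ i, 0 < ((F i).ncard : ℝ) := by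
    intro i
    exact_mod_cast (Set.ncard_pos (hFfin i)).mpr (hFne i)
  have hn1pos : ∀ i, 1 ≤ (restr (F i) X).ncard :=
    fun i => (Set.ncard_pos (restr_finite (hFfin i) X)).mpr (restr_nonempty ⟨y, hyX⟩)
  have hn2pos : ∀ i, 1 ≤ (restr (F i) (Δ '' X)).ncard :=
    fun i => (Set.ncard_pos (restr_finite (hFfin i) _)).mpr
      (restr_nonempty ⟨Δ y, Set.mem_image_of_mem Δ hyX⟩)
  have hql : (0:ℝ) ≤ Real.log (Nat.card Q) := Real.log_nonneg (by exact_mod_cast hq1)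
  have hbound : ∀ i, a i ≤ b i + c i := by
    intro i
    have hsplit : (restr (R.clos S (F i) θ) (Δ '' X)).ncard
        ≤ (restr (F i) (Δ '' X)).ncard * Nat.card Q ^ (R.clos S (F i) θ \ F i).ncard :=
      restr_split (Δ '' X) (subset_clos R S (F i) θ) (clos_finite R S hS (hFfin i) θ)
    have hbd : (R.clos S (F i) θ \ F i).ncard ≤ (R.bdry S (F i) θ).ncard := by
      refine Set.ncard_le_ncard ?_
        ((clos_finite R S hS (hFfin i) θ).subset Set.diff_subset)
      intro m hm
      exact ⟨hm.1, fun hint => hm.2 hint.1⟩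
    have hlog : Real.log ((restr (F i) X).ncard : ℝ)
        ≤ Real.log ((restr (F i) (Δ '' X)).ncard : ℝ) +
          ((R.bdry S (F i) θ).ncard : ℝ) * Real.log (Nat.card Q) := by
      have h1 : ((restr (F i) X).ncard : ℝ)
          ≤ (((restr (F i) (Δ '' X)).ncard *
              Nat.card Q ^ (R.clos S (F i) θ \ F i).ncard : ℕ) : ℝ) := by
        exact_mod_cast le_trans (key i) hsplit
      have hpos2 : (0:ℝ) < ((restr (F i) (Δ '' X)).ncard : ℝ) := by
        exact_mod_cast Nat.lt_of_lt_of_le Nat.zero_lt_one (hn2pos i)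
      have hposq : (0:ℝ) < ((Nat.card Q : ℝ)) := by exact_mod_cast hq1
      calc Real.log ((restr (F i) X).ncard : ℝ)
          ≤ Real.log (((restr (F i) (Δ '' X)).ncard *
              Nat.card Q ^ (R.clos S (F i) θ \ F i).ncard : ℕ) : ℝ) :=
            Real.log_le_log (by exact_mod_cast hn1pos i) h1
        _ = Real.log ((restr (F i) (Δ '' X)).ncard : ℝ) +
            ((R.clos S (F i) θ \ F i).ncard : ℝ) * Real.log (Nat.card Q) := by
            push_cast
            rw [Real.log_mul (ne_of_gt hpos2) (by positivity), Real.log_pow]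
        _ ≤ _ := by
            have hc2 : ((R.clos S (F i) θ \ F i).ncard : ℝ)
                ≤ ((R.bdry S (F i) θ).ncard : ℝ) := by exact_mod_cast hbd
            exact add_le_add_right (mul_le_mul_of_nonneg_right hc2 hql) _
    calc a i = Real.log ((restr (F i) X).ncard : ℝ) / ((F i).ncard : ℝ) := rfl
      _ ≤ (Real.log ((restr (F i) (Δ '' X)).ncard : ℝ) +
            ((R.bdry S (F i) θ).ncard : ℝ) * Real.log (Nat.card Q)) /
            ((F i).ncard : ℝ) := (div_le_div_iff_of_pos_right (hFpos i)).mpr hlog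
      _ = b i + c i := by
          rw [add_div, mul_div_right_comm]
  have hc0 : Filter.Tendsto c Filter.atTop (nhds 0) := by
    have h := (hFtend θ).mul_const (Real.log (Nat.card Q))
    rw [zero_mul] at h
    exact h
  have ha0 : ∀ i, 0 ≤ a i := fun i =>
    div_nonneg (Real.log_nonneg (by exact_mod_cast hn1pos i)) (le_of_lt (hFpos i))
  have hb0 : ∀ i, 0 ≤ b i := fun i =>
    div_nonneg (Real.log_nonneg (by exact_mod_cast hn2pos i)) (le_of_lt (hFpos i))
  have hbq : ∀ i, b i ≤ Real.log (Nat.card Q) := by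
    intro i
    have h2 : ((restr (F i) (Δ '' X)).ncard : ℝ)
        ≤ ((Nat.card Q ^ (F i).ncard : ℕ) : ℝ) := by
      exact_mod_cast ncard_restr_le (hFfin i) _
    have h3 : Real.log ((restr (F i) (Δ '' X)).ncard : ℝ)
        ≤ ((F i).ncard : ℝ) * Real.log (Nat.card Q) := by
      calc Real.log ((restr (F i) (Δ '' X)).ncard : ℝ)
          ≤ Real.log ((Nat.card Q ^ (F i).ncard : ℕ) : ℝ) :=
            Real.log_le_log (by exact_mod_cast hn2pos i) h2
        _ = ((F i).ncard : ℝ) * Real.log (Nat.card Q) := by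
            push_cast
            rw [Real.log_pow]
    calc b i = Real.log ((restr (F i) (Δ '' X)).ncard : ℝ) / ((F i).ncard : ℝ) := rfl
      _ ≤ (((F i).ncard : ℝ) * Real.log (Nat.card Q)) / ((F i).ncard : ℝ) :=
          (div_le_div_iff_of_pos_right (hFpos i)).mpr h3
      _ = Real.log (Nat.card Q) := mul_div_cancel_left₀ _ (ne_of_gt (hFpos i))
  have hAbb : Filter.IsBoundedUnder (· ≥ ·) (Filter.atTop : Filter I) a :=
    ⟨0, Filter.eventually_map.mpr (Filter.Eventually.of_forall ha0)⟩
  have hAcb : Filter.IsCoboundedUnder (· ≤ ·) (Filter.atTop : Filter I) a :=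
    hAbb.isCoboundedUnder_le
  have hBbb : Filter.IsBoundedUnder (· ≥ ·) (Filter.atTop : Filter I) b :=
    ⟨0, Filter.eventually_map.mpr (Filter.Eventually.of_forall hb0)⟩
  have hBub : Filter.IsBoundedUnder (· ≤ ·) (Filter.atTop : Filter I) b :=
    ⟨Real.log (Nat.card Q), Filter.eventually_map.mpr (Filter.Eventually.of_forall hbq)⟩
  have hCub : Filter.IsBoundedUnder (· ≤ ·) (Filter.atTop : Filter I) c :=
    hc0.isBoundedUnder_le
  have hCbb : Filter.IsBoundedUnder (· ≥ ·) (Filter.atTop : Filter I) c :=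
    hc0.isBoundedUnder_ge
  have hCcb : Filter.IsCoboundedUnder (· ≤ ·) (Filter.atTop : Filter I) c :=
    hCbb.isCoboundedUnder_le
  have hBCub : Filter.IsBoundedUnder (· ≤ ·) (Filter.atTop : Filter I) (b + c) :=
    Filter.isBoundedUnder_le_add hBub hCub
  have h2 : Filter.limsup a Filter.atTop ≤ Filter.limsup (b + c) Filter.atTop :=
    Filter.limsup_le_limsup (Filter.Eventually.of_forall (fun i => hbound i)) hAcb hBCub
  have h3 : Filter.limsup (b + c) Filter.atTop
      ≤ Filter.limsup b Filter.atTop + Filter.limsup c Filter.atTop :=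
    limsup_add_le hBbb hBub hCcb hCub
  have h4 : Filter.limsup c Filter.atTop = 0 := hc0.limsup_eq
  have hEa : entropy R S F X = Filter.limsup a Filter.atTop := rfl
  have hEb : entropy R S F (Δ '' X) = Filter.limsup b Filter.atTop := rfl
  rw [hEa, hEb] at hent
  linarith

end GoE
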